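/- Local-global principle: for every positive formula φ of ℒ^□, the formula (φ ∗ ⊤) → φ is valid: whenever f,𝒱,x ⊨ φ ∗ ⊤, then f,𝒱,x ⊨ φ. -/
import Mathlib


/-- A system: a set of behaviours `B` together with a map into component snapshots. -/
structure System (Comp : Type) (Beh : Comp → Type) where
  B : Type
  C : Set Comp
  f : B → (c : Comp) → c ∈ C → Beh c

variable {Comp : Type} {Beh : Comp → Type}

/-- `σ` is an implementation of `g` in `f`: `Comp(g) ⊆ Comp(f)` and `f_{Comp(g)} = g ∘ σ`. -/
def Implements (f g : System Comp Beh) (σ : f.B → g.B) : Prop :=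
  g.C ⊆ f.C ∧ ∀ (b : f.B) (c : Comp) (hg : c ∈ g.C) (hf : c ∈ f.C),
    f.f b c hf = g.f (σ b) c hg
/-- `(x,y)` is compatible: the interface is empty or `f_I(x) = g_I(y)`. -/
def Compatible (f g : System Comp Beh) (x : f.B) (y : g.B) : Prop :=
  f.C ∩ g.C = ∅ ∨
    ∀ (c : Comp) (hf : c ∈ f.C) (hg : c ∈ g.C), f.f x c hf = g.f y c hg

open Classical in
/-- The canonical free composition `f ⊗ g`. -/
noncomputable def tensor (f g : System Comp Beh) : System Comp Beh where
  B := {p : f.B × g.B // Compatible f g p.1 p.2}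
  C := f.C ∪ g.C
  f := fun p c hc =>
    if hf : c ∈ f.C then f.f p.val.1 c hf
    else g.f p.val.2 c (Or.resolve_left hc hf)
/-- Systems are equivalent if each implements the other. -/
def SysEquiv (f g : System Comp Beh) : Prop :=
  (∃ σ : f.B → g.B, Implements f g σ) ∧ (∃ τ : g.B → f.B, Implements g f τ)

/-- `(f,x) = (f₁,x₁) ⊗ (f₂,x₂)`: `f ≡ f₁ ⊗ f₂` and the behaviour `x` agrees
with `x₁` on `Comp(f₁)` and with `x₂` on `Comp(f₂)`. -/
def Decomp (f : System Comp Beh) (x : f.B)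
    (f1 : System Comp Beh) (x1 : f1.B)
    (f2 : System Comp Beh) (x2 : f2.B) : Prop :=
  SysEquiv f (tensor f1 f2) ∧
  (∀ (c : Comp) (hc1 : c ∈ f1.C) (hcf : c ∈ f.C), f.f x c hcf = f1.f x1 c hc1) ∧
  (∀ (c : Comp) (hc2 : c ∈ f2.C) (hcf : c ∈ f.C), f.f x c hcf = f2.f x2 c hc2)

/-- Formulas of the logic `ℒ*` : atoms, ∧, ¬, □, ⊤ and the multiplicative
conjunction ∗. -/
inductive Fml (Comp : Type) (Var : Comp → Type) : Type
  | atom (c : Comp) (p : Var c)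
  | and (φ ψ : Fml Comp Var)
  | not (φ : Fml Comp Var)
  | box (φ : Fml Comp Var)
  | top
  | star (φ ψ : Fml Comp Var)

variable {Var : Comp → Type}

/-- The formula only uses atoms over the components in `C`. -/
def InLogic (C : Set Comp) : Fml Comp Var → Prop
  | .atom c _ => c ∈ C
  | .and φ ψ => InLogic C φ ∧ InLogic C ψ
  | .not φ => InLogic C φ
  | .box φ => InLogic C φ
  | .top => True
  | .star φ ψ => InLogic C φ ∧ InLogic C ψ

/-- Satisfaction for `ℒ*`; in the clause for `∗`, the decomposed formulas are
required to be in the logic of the respective subsystem. -/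
def Sat (V : (c : Comp) → Var c → Set (Beh c)) :
    (f : System Comp Beh) → f.B → Fml Comp Var → Prop
  | f, x, .atom c p => ∃ hc : c ∈ f.C, f.f x c hc ∈ V c p
  | f, x, .and φ ψ => Sat V f x φ ∧ Sat V f x ψ
  | f, x, .not φ => ¬ Sat V f x φ
  | f, _, .box φ => ∀ y : f.B, Sat V f y φ
  | _, _, .top => True
  | f, x, .star φ ψ => ∃ (f1 f2 : System Comp Beh) (x1 : f1.B) (x2 : f2.B),
      Decomp f x f1 x1 f2 x2 ∧ InLogic f1.C φ ∧ InLogic f2.C ψ ∧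
      Sat V f1 x1 φ ∧ Sat V f2 x2 ψ

/-- The formula belongs to `ℒ^□`: it contains no `∗` and no `⊤`. -/
def NoStar : Fml Comp Var → Prop
  | .atom _ _ => True
  | .and φ ψ => NoStar φ ∧ NoStar ψ
  | .not φ => NoStar φ
  | .box φ => NoStar φ
  | .top => False
  | .star _ _ => False

mutual
  /-- Positive: no `□` in the scope of an odd number of `¬`. -/
  def PosFml : Fml Comp Var → Prop
    | .atom _ _ => True
    | .and φ ψ => PosFml φ ∧ PosFml ψ
    | .not φ => NegFml φ
    | .box φ => PosFml φ
    | .top => True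
    | .star φ ψ => PosFml φ ∧ PosFml ψ
  /-- Negative: no `□` in the scope of an even number of `¬`. -/
  def NegFml : Fml Comp Var → Prop
    | .atom _ _ => True
    | .and φ ψ => NegFml φ ∧ NegFml ψ
    | .not φ => PosFml φ
    | .box _ => False
    | .top => True
    | .star φ ψ => NegFml φ ∧ NegFml ψ
end

lemma transfer (V : (c : Comp) → Var c → Set (Beh c))
    (f f1 : System Comp Beh) (ρ : f.B → f1.B) (himpl : Implements f f1 ρ) :
    ∀ φ : Fml Comp Var, NoStar φ → InLogic f1.C φ →
      ∀ (x : f.B) (x1 : f1.B),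
        (∀ (c : Comp) (hc1 : c ∈ f1.C) (hcf : c ∈ f.C),
          f.f x c hcf = f1.f x1 c hc1) →
        (PosFml φ → Sat V f1 x1 φ → Sat V f x φ) ∧
        (NegFml φ → Sat V f x φ → Sat V f1 x1 φ) := by
  intro φ
  induction φ with
  | atom c p =>
      intro _ hin x x1 hagree
      constructor
      · rintro _ ⟨hc1, hv⟩
        exact ⟨himpl.1 hc1, by rw [hagree c hc1 (himpl.1 hc1)]; exact hv⟩
      · rintro _ ⟨hcf, hv⟩
        exact ⟨hin, by rw [← hagree c hin hcf]; exact hv⟩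
  | and φ ψ ihφ ihψ =>
      intro hns hin x x1 hagree
      have hφ := ihφ hns.1 hin.1 x x1 hagree
      have hψ := ihψ hns.2 hin.2 x x1 hagree
      constructor
      · rintro ⟨p1, p2⟩ ⟨s1, s2⟩
        exact ⟨hφ.1 p1 s1, hψ.1 p2 s2⟩
      · rintro ⟨p1, p2⟩ ⟨s1, s2⟩
        exact ⟨hφ.2 p1 s1, hψ.2 p2 s2⟩
  | not φ ih =>
      intro hns hin x x1 hagree
      have h := ih hns hin x x1 hagree
      constructor
      · intro hneg hs hs'
        exact hs (h.2 hneg hs')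
      · intro hpos hs hs'
        exact hs (h.1 hpos hs')
  | box φ ih =>
      intro hns hin x x1 hagree
      constructor
      · intro hpos hs y
        exact (ih hns hin y (ρ y) (fun c hc1 hcf => himpl.2 y c hc1 hcf)).1 hpos (hs (ρ y))
      · intro hneg
        exact absurd hneg (by simp [NegFml])
  | top =>
      intro _ _ x x1 _
      exact ⟨fun _ _ => trivial, fun _ _ => trivial⟩
  | star φ ψ _ _ =>
      intro hns
      exact absurd hns (by simp [NoStar])

/-- local-global principle: for every positive formula `φ` of
`ℒ^□`, the formula `(φ ∗ ⊤) → φ` is valid. -/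
theorem local_global (V : (c : Comp) → Var c → Set (Beh c))
    (f : System Comp Beh) (x : f.B)
    (φ : Fml Comp Var) (hφ : NoStar φ) (hpos : PosFml φ)
    (hsat : Sat V f x (Fml.star φ Fml.top)) :
    Sat V f x φ := by
  obtain ⟨f1, f2, x1, x2, ⟨⟨⟨σ, hσ⟩, _⟩, hag1, _⟩, hin1, _, hsat1, _⟩ := hsat
  have himpl : Implements f f1 (fun b => ((σ b).val.1)) := by
    refine ⟨fun c hc => hσ.1 (Or.inl hc), fun b c hc1 hcf => ?_⟩
    have := hσ.2 b c (Or.inl hc1) hcf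
    rw [this]
    simp [tensor, hc1]
  exact (transfer V f f1 _ himpl φ hφ hin1 x x1 hag1).1 hpos hsat1
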